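/- Let G be a subgroup of PL₊(I) generated by a finite set X. Then the set of all breakpoints of elements of G has only finitely many orbits under the action of G on [0,1], and the number of such orbits is at most the cardinality of the set of breakpoints of the elements of X. In fact, every breakpoint of an element of G lies in the same G-orbit as some breakpoint of some element of X. -/

import Mathlib

open Set

namespace PLPaper

/-- We model `PL₊(I)` inside the group of bijections of `ℝ` with *opposite*
composition, so that the group acts on `ℝ` on the right:
`x · (g * h) = (x · g) · h`. -/
abbrev PermR : Type := (Equiv.Perm ℝ)ᵐᵒᵖ

/-- The (right) action of `g` on the point `x`. -/
def ap (g : PermR) (x : ℝ) : ℝ := g.unop x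

/-- `g` is affine on a neighbourhood of `x`. -/
def IsLocallyAffineAt (g : PermR) (x : ℝ) : Prop :=
  ∃ m b : ℝ, ∀ᶠ y in nhds x, ap g y = m * y + b

/-- The breakpoints of `g`: points of `(0,1)` where `g` is not locally affine
(equivalently, for a PL map, where the derivative fails to exist). -/
def Breakpoints (g : PermR) : Set ℝ :=
  {x ∈ Ioo (0:ℝ) 1 | ¬ IsLocallyAffineAt g x}

/-- `g` is an orientation-preserving piecewise-linear homeomorphism of `[0,1]`
(extended by the identity to all of `ℝ`), with finitely many breakpoints. -/
def IsPL (g : PermR) : Prop :=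
  StrictMono (ap g) ∧ (∀ x ∉ Ioo (0:ℝ) 1, ap g x = x) ∧ (Breakpoints g).Finite

/-- The support of `g`. -/
def Supp (g : PermR) : Set ℝ := {x | ap g x ≠ x}

/-- `(a,b)` is an orbital of `g`, i.e. a connected component of `Supp g`. -/
def IsOrbital (g : PermR) (a b : ℝ) : Prop :=
  a < b ∧ Ioo a b ⊆ Supp g ∧ a ∉ Supp g ∧ b ∉ Supp g

/-- The support of a subgroup `G`. -/
def GSupp (G : Subgroup PermR) : Set ℝ := ⋃ g ∈ (G : Set PermR), Supp g

/-- `(a,b)` is an orbital of the group `G`, i.e. a connected component of its support. -/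
def IsGroupOrbital (G : Subgroup PermR) (a b : ℝ) : Prop :=
  a < b ∧ Ioo a b ⊆ GSupp G ∧ a ∉ GSupp G ∧ b ∉ GSupp G

/-- The pair `g, h` carries a transition chain: orbitals `(a,b)` of `g` and
`(c,d)` of `h` with `a < c < b < d`. -/
def ElemsTransitionChain (g h : PermR) : Prop :=
  ∃ a b c d : ℝ, IsOrbital g a b ∧ IsOrbital h c d ∧ a < c ∧ c < b ∧ b < d

/-- The pair `g, h` carries a one-sided overlap: orbitals `(a,b)` of `g` and
`(a,c)` of `h`, or `(a,b)` of `g` and `(c,b)` of `h`, where `a < c < b`. -/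
def ElemsOneSidedOverlap (g h : PermR) : Prop :=
  ∃ a b c : ℝ, a < c ∧ c < b ∧
    ((IsOrbital g a b ∧ IsOrbital h a c) ∨ (IsOrbital g a b ∧ IsOrbital h c b))

def AdmitsTransitionChain (G : Subgroup PermR) : Prop :=
  ∃ g ∈ G, ∃ h ∈ G, ElemsTransitionChain g h

def AdmitsOneSidedOverlap (G : Subgroup PermR) : Prop :=
  ∃ g ∈ G, ∃ h ∈ G, ElemsOneSidedOverlap g h

/-- `G` admits a bad overlap: orbitals `A` of `f ∈ G` and `B` of `g ∈ G` which
intersect, are distinct, and neither closure is contained in the other orbital. -/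
def AdmitsBadOverlap (G : Subgroup PermR) : Prop :=
  ∃ f ∈ G, ∃ g ∈ G, ∃ a b c d : ℝ, IsOrbital f a b ∧ IsOrbital g c d ∧
    (Ioo a b ∩ Ioo c d).Nonempty ∧ Ioo a b ≠ Ioo c d ∧
    ¬ Icc a b ⊆ Ioo c d ∧ ¬ Icc c d ⊆ Ioo a b

/-- A tower: a set of signed orbitals `((a,b), g)` with pairwise nested orbitals,
where equal orbitals force equal signatures. -/
def IsTower (T : Set ((ℝ × ℝ) × PermR)) : Prop :=
  (∀ p ∈ T, IsOrbital p.2 p.1.1 p.1.2) ∧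
  (∀ p ∈ T, ∀ q ∈ T,
      Ioo p.1.1 p.1.2 ⊆ Ioo q.1.1 q.1.2 ∨ Ioo q.1.1 q.1.2 ⊆ Ioo p.1.1 p.1.2) ∧
  (∀ p ∈ T, ∀ q ∈ T, p.1 = q.1 → p.2 = q.2)

/-- `G` admits the tower `T` if `T` is a tower all of whose signatures lie in `G`. -/
def AdmitsTower (G : Subgroup PermR) (T : Set ((ℝ × ℝ) × PermR)) : Prop :=
  IsTower T ∧ ∀ p ∈ T, p.2 ∈ G

def AdmitsInfiniteTower (G : Subgroup PermR) : Prop :=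
  ∃ T : Set ((ℝ × ℝ) × PermR), AdmitsTower G T ∧ T.Infinite

/-- The set of breakpoints of the elements of a set `S`. -/
def BreakSet (S : Set PermR) : Set ℝ := ⋃ g ∈ S, Breakpoints g

/-- The derived length of a group: the least `n` with `derivedSeries G n = ⊥`. -/
noncomputable def derivedLength (G : Type*) [Group G] : ℕ :=
  sInf {n : ℕ | derivedSeries G n = ⊥}

/-- The `G`-orbit of a point `x`. -/
def orbitOf (G : Subgroup PermR) (x : ℝ) : Set ℝ := {y | ∃ g ∈ G, ap g x = y}

lemma ap_mul' (g h : PermR) (x : ℝ) : ap (g * h) x = ap h (ap g x) := rfl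

lemma ap_one' (x : ℝ) : ap 1 x = x := rfl

lemma ap_inv_ap (g : PermR) (x : ℝ) : ap g⁻¹ (ap g x) = x := by
  simp [ap]

lemma ap_ap_inv (g : PermR) (x : ℝ) : ap g (ap g⁻¹ x) = x := by
  simp [ap]

lemma affine_comp {g h : PermR} {x : ℝ} (hg : IsLocallyAffineAt g x)
    (hh : IsLocallyAffineAt h (ap g x)) : IsLocallyAffineAt (g * h) x := by
  obtain ⟨m, b, hg⟩ := hg
  obtain ⟨m', b', hh⟩ := hh
  have hgx : ap g x = m * x + b := hg.self_of_nhds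
  have htend : Filter.Tendsto (ap g) (nhds x) (nhds (ap g x)) := by
    have hc : Filter.Tendsto (fun y => m * y + b) (nhds x) (nhds (m * x + b)) := by
      exact (continuous_const.mul continuous_id).add continuous_const |>.tendsto x
    rw [hgx]
    exact hc.congr' (Filter.EventuallyEq.symm hg)
  refine ⟨m' * m, m' * b + b', ?_⟩
  filter_upwards [hg, htend.eventually hh] with y h1 h2
  rw [ap_mul', h2, h1]; ring

lemma affine_inv {g : PermR} (hmono : StrictMono (ap g)) {x : ℝ}
    (hg : IsLocallyAffineAt g x) : IsLocallyAffineAt g⁻¹ (ap g x) := by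
  obtain ⟨m, b, hg⟩ := hg
  have hgx : ap g x = m * x + b := hg.self_of_nhds
  obtain ⟨ε, hε, hball⟩ := Metric.eventually_nhds_iff.mp hg
  have hx2 : |x + ε / 2 - x| < ε := by
    rw [add_sub_cancel_left, abs_of_pos (by linarith)]; linarith
  have h2 : ap g (x + ε / 2) = m * (x + ε / 2) + b := hball hx2
  have hm : 0 < m := by
    have := hmono (show x < x + ε / 2 by linarith)
    rw [hgx, h2] at this
    nlinarith
  refine ⟨m⁻¹, -b / m, ?_⟩
  have hφ : Filter.Tendsto (fun w => (w - b) / m) (nhds (ap g x)) (nhds x) := by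
    have : Filter.Tendsto (fun w => (w - b) / m) (nhds (ap g x)) (nhds ((ap g x - b) / m)) :=
      ((continuous_id.sub continuous_const).div_const m).tendsto _
    convert this using 2
    rw [hgx]; field_simp; ring
  filter_upwards [hφ.eventually hg] with w hw
  have h1 : ap g ((w - b) / m) = w := by
    rw [hw]; field_simp; ring
  have h3 : ap g⁻¹ w = (w - b) / m := by
    have := congrArg (ap g⁻¹) h1
    rw [ap_inv_ap] at this; exact this.symm
  rw [h3]; field_simp; ring

lemma ap_mem_Ioo {g : PermR} (hpl : IsPL g) {x : ℝ} (hx : x ∈ Ioo (0:ℝ) 1) :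
    ap g x ∈ Ioo (0:ℝ) 1 := by
  obtain ⟨hmono, hfix, -⟩ := hpl
  have h0 : ap g 0 = 0 := hfix 0 (by simp)
  have h1 : ap g 1 = 1 := hfix 1 (by simp)
  exact ⟨h0 ▸ hmono hx.1, h1 ▸ hmono hx.2⟩


theorem statement2 (X : Set PermR) (hXfin : X.Finite)
    (G : Subgroup PermR) (hG : G = Subgroup.closure X)
    (hPL : ∀ g ∈ G, IsPL g) :
    (∀ x ∈ BreakSet (G : Set PermR), ∃ y ∈ BreakSet X, ∃ g ∈ G, ap g y = x) ∧
    ((orbitOf G) '' BreakSet (G : Set PermR)).Finite ∧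
    ((orbitOf G) '' BreakSet (G : Set PermR)).ncard ≤ (BreakSet X).ncard := by
  -- Part 1: every breakpoint of an element of G is in the orbit of a breakpoint of X
  have key : ∀ g ∈ G, ∀ x ∈ Breakpoints g, ∃ y ∈ BreakSet X, ∃ k ∈ G, ap k y = x := by
    intro g hg
    rw [hG] at hg
    induction hg using Subgroup.closure_induction with
    | mem g hgX =>
      intro x hx
      exact ⟨x, Set.mem_biUnion hgX hx, 1, one_mem G, ap_one' x⟩
    | one =>
      intro x hx
      exact absurd ⟨1, 0, Filter.Eventually.of_forall fun y => by simp [ap_one']⟩ hx.2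
    | mul g h hgc hhc ihg ihh =>
      intro x hx
      have hgG : g ∈ G := hG ▸ hgc
      have hhG : h ∈ G := hG ▸ hhc
      by_cases haff : IsLocallyAffineAt g x
      · have hna : ¬ IsLocallyAffineAt h (ap g x) := fun hh' =>
          hx.2 (affine_comp haff hh')
        have hmem : ap g x ∈ Ioo (0:ℝ) 1 := ap_mem_Ioo (hPL g hgG) hx.1
        obtain ⟨y, hy, k, hkG, hky⟩ := ihh (ap g x) ⟨hmem, hna⟩
        refine ⟨y, hy, k * g⁻¹, mul_mem hkG (inv_mem hgG), ?_⟩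
        rw [ap_mul', hky, ap_inv_ap]
      · obtain ⟨y, hy, k, hkG, hky⟩ := ihg x ⟨hx.1, haff⟩
        exact ⟨y, hy, k, hkG, hky⟩
    | inv g hgc ihg =>
      intro x hx
      have hgG : g ∈ G := hG ▸ hgc
      have hginvG : g⁻¹ ∈ G := inv_mem hgG
      have hmem : ap g⁻¹ x ∈ Ioo (0:ℝ) 1 := ap_mem_Ioo (hPL g⁻¹ hginvG) hx.1
      have hna : ¬ IsLocallyAffineAt g (ap g⁻¹ x) := by
        intro haff
        have := affine_inv (hPL g hgG).1 haff
        rw [ap_ap_inv] at this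
        exact hx.2 this
      obtain ⟨y, hy, k, hkG, hky⟩ := ihg (ap g⁻¹ x) ⟨hmem, hna⟩
      refine ⟨y, hy, k * g, mul_mem hkG hgG, ?_⟩
      rw [ap_mul', hky, ap_ap_inv]
  have part1 : ∀ x ∈ BreakSet (G : Set PermR), ∃ y ∈ BreakSet X, ∃ g ∈ G, ap g y = x := by
    intro x hx
    obtain ⟨g, hgG, hxg⟩ := Set.mem_iUnion₂.mp hx
    exact key g hgG x hxg
  have hXsub : X ⊆ (G : Set PermR) := hG ▸ Subgroup.subset_closure
  have hBXfin : (BreakSet X).Finite :=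
    hXfin.biUnion fun g hg => (hPL g (hXsub hg)).2.2
  have orbit_eq : ∀ x y : ℝ, (∃ g ∈ G, ap g y = x) → orbitOf G x = orbitOf G y := by
    rintro x y ⟨g, hgG, hgx⟩
    ext z
    constructor
    · rintro ⟨k, hkG, rfl⟩
      exact ⟨g * k, mul_mem hgG hkG, by rw [ap_mul', hgx]⟩
    · rintro ⟨k, hkG, rfl⟩
      refine ⟨g⁻¹ * k, mul_mem (inv_mem hgG) hkG, ?_⟩
      rw [ap_mul']
      congr 1
      rw [← hgx, ap_inv_ap]
  have hsub : orbitOf G '' BreakSet (G : Set PermR) ⊆ orbitOf G '' BreakSet X := by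
    rintro s ⟨x, hx, rfl⟩
    obtain ⟨y, hy, g, hgG, hgx⟩ := part1 x hx
    exact ⟨y, hy, (orbit_eq x y ⟨g, hgG, hgx⟩).symm⟩
  refine ⟨part1, (hBXfin.image _).subset hsub, ?_⟩
  calc (orbitOf G '' BreakSet (G : Set PermR)).ncard
      ≤ (orbitOf G '' BreakSet X).ncard := Set.ncard_le_ncard hsub (hBXfin.image _)
    _ ≤ (BreakSet X).ncard := Set.ncard_image_le hBXfin

end PLPaper
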